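/- arXiv:2407.21411 — 5 statements merged into one kernel-verified Lean document; each statement's English description precedes it below -/
import Mathlib

section
/- For every α ∈ (1,2), the constant c_α := −α(α−1)/(Γ(2−α)·cos(πα/2)) is strictly positive, and for every y ∈ ℝ the integral ∫_ℝ (1 − cos(u·y))/|u|^{α+1} du converges absolutely and satisfies c_α · ∫_ℝ (1 − cos(u·y))/|u|^{α+1} du = 2·|y|^α. -/
set_option maxHeartbeats 1000000

open MeasureTheory Real Set Filter


lemma laplace_one_sub_cos {s : ℝ} (hs : 0 < s) :
    IntegrableOn (fun t : ℝ => (1 - Real.cos t) * Real.exp (-(s * t))) (Ioi 0) ∧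
    ∫ t in Ioi 0, (1 - Real.cos t) * Real.exp (-(s * t)) = 1 / (s * (s ^ 2 + 1)) := by
  set F : ℝ → ℝ := fun t =>
    -Real.exp (-(s * t)) / s - Real.exp (-(s * t)) * (Real.sin t - s * Real.cos t) / (s ^ 2 + 1)
    with hF
  have hs1 : (0:ℝ) < s ^ 2 + 1 := by positivity
  have hderiv : ∀ t : ℝ, HasDerivAt F ((1 - Real.cos t) * Real.exp (-(s * t))) t := by
    intro t
    have he : HasDerivAt (fun t : ℝ => Real.exp (-(s * t))) (-s * Real.exp (-(s * t))) t := by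
      have := (Real.hasDerivAt_exp (-(s * t))).comp t
        (((hasDerivAt_id t).const_mul s).neg)
      simpa [mul_comm, Function.comp_def, Pi.neg_def] using this
    have h1 : HasDerivAt (fun t : ℝ => -Real.exp (-(s * t)) / s)
        (Real.exp (-(s * t))) t := by
      have := (he.neg).div_const s
      refine this.congr_deriv ?_
      field_simp
    have h2 : HasDerivAt (fun t : ℝ => Real.sin t - s * Real.cos t)
        (Real.cos t + s * Real.sin t) t := by
      simpa [mul_comm, sub_eq_add_neg, Pi.neg_def, Pi.add_def] using
        (Real.hasDerivAt_sin t).sub ((Real.hasDerivAt_cos t).const_mul s)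
    have h3 : HasDerivAt (fun t : ℝ => Real.exp (-(s * t)) * (Real.sin t - s * Real.cos t))
        ((-s * Real.exp (-(s * t))) * (Real.sin t - s * Real.cos t)
          + Real.exp (-(s * t)) * (Real.cos t + s * Real.sin t)) t := he.mul h2
    have h4 := h1.sub (h3.div_const (s ^ 2 + 1))
    refine h4.congr_deriv ?_
    field_simp
    ring
  have htend : Tendsto F atTop (nhds 0) := by
    have hexp : Tendsto (fun t : ℝ => Real.exp (-(s * t))) atTop (nhds 0) := by
      have h0 : Tendsto (fun t : ℝ => s * t) atTop atTop :=
        Tendsto.const_mul_atTop hs tendsto_id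
      have := Real.tendsto_exp_neg_atTop_nhds_zero.comp h0
      simpa [Function.comp_def] using this
    have hbound : ∀ t : ℝ, ‖F t‖ ≤ Real.exp (-(s * t)) * (1 / s + (1 + s) / (s ^ 2 + 1)) := by
      intro t
      have h1 : |Real.sin t - s * Real.cos t| ≤ 1 + s := by
        calc |Real.sin t - s * Real.cos t| ≤ |Real.sin t| + |s * Real.cos t| := abs_sub _ _
          _ ≤ 1 + s := by
            have := Real.abs_sin_le_one t
            have h2 := Real.abs_cos_le_one t
            have : |s * Real.cos t| ≤ s := by
              rw [abs_mul, abs_of_pos hs]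
              nlinarith
            have := Real.abs_sin_le_one t
            linarith
      have hexppos : (0:ℝ) < Real.exp (-(s * t)) := Real.exp_pos _
      rw [hF]
      simp only [Real.norm_eq_abs]
      calc |(-Real.exp (-(s * t)) / s - Real.exp (-(s * t)) * (Real.sin t - s * Real.cos t) / (s ^ 2 + 1))|
          ≤ |(-Real.exp (-(s * t)) / s)| + |Real.exp (-(s * t)) * (Real.sin t - s * Real.cos t) / (s ^ 2 + 1)| :=
            abs_sub _ _
        _ ≤ Real.exp (-(s * t)) / s + Real.exp (-(s * t)) * (1 + s) / (s ^ 2 + 1) := by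
            have hA : |(-Real.exp (-(s * t)) / s)| = Real.exp (-(s * t)) / s := by
              rw [abs_div, abs_neg, abs_of_pos hexppos, abs_of_pos hs]
            have hB : |Real.exp (-(s * t)) * (Real.sin t - s * Real.cos t) / (s ^ 2 + 1)|
                ≤ Real.exp (-(s * t)) * (1 + s) / (s ^ 2 + 1) := by
              rw [abs_div, abs_mul, abs_of_pos hexppos, abs_of_pos hs1]
              gcongr
            linarith
        _ = Real.exp (-(s * t)) * (1 / s + (1 + s) / (s ^ 2 + 1)) := by ring
    refine squeeze_zero_norm hbound ?_
    simpa using hexp.mul_const _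
  have hnonneg : ∀ t ∈ Ioi (0:ℝ), 0 ≤ (1 - Real.cos t) * Real.exp (-(s * t)) := by
    intro t _
    have := Real.cos_le_one t
    exact mul_nonneg (by linarith) (Real.exp_pos _).le
  have hcont : ContinuousWithinAt F (Ici (0:ℝ)) 0 :=
    (hderiv 0).continuousAt.continuousWithinAt
  have hderiv' : ∀ t ∈ Ioi (0:ℝ), HasDerivAt F ((1 - Real.cos t) * Real.exp (-(s * t))) t :=
    fun t _ => hderiv t
  constructor
  · exact integrableOn_Ioi_deriv_of_nonneg hcont hderiv' hnonneg htend
  · rw [integral_Ioi_of_hasDerivAt_of_nonneg hcont hderiv' hnonneg htend]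
    have hF0 : F 0 = -(1/s) + s / (s ^ 2 + 1) := by
      simp [hF]
      ring
    rw [hF0]
    field_simp
    ring


lemma beta_Ioi {a : ℝ} (ha : 0 < a) (ha1 : a < 1) :
    ∫ u in Ioi (0:ℝ), u ^ (a - 1) / (1 + u) = Real.Gamma a * Real.Gamma (1 - a) := by
  -- change of variables u = x / (1 - x), mapping Ioo 0 1 onto Ioi 0
  have key : ∫ u in Ioi (0:ℝ), u ^ (a - 1) / (1 + u)
      = ∫ x in Ioo (0:ℝ) 1, x ^ (a - 1) * (1 - x) ^ (-a) := by
    have himg : (fun x : ℝ => x / (1 - x)) '' (Ioo 0 1) = Ioi 0 := by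
      ext u
      simp only [mem_image, mem_Ioo, mem_Ioi]
      constructor
      · rintro ⟨x, ⟨hx0, hx1⟩, rfl⟩
        exact div_pos hx0 (by linarith)
      · intro hu
        refine ⟨u / (1 + u), ⟨div_pos hu (by linarith), ?_⟩, ?_⟩
        · rw [div_lt_one (by linarith)]; linarith
        · have h1 : 1 - u / (1 + u) = 1 / (1 + u) := by field_simp; ring
          rw [h1]
          field_simp
    have hd : ∀ x ∈ Ioo (0:ℝ) 1, HasDerivWithinAt (fun x : ℝ => x / (1 - x))
        ((1 - x)⁻¹ ^ 2) (Ioo 0 1) x := by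
      intro x hx
      have hne : 1 - x ≠ 0 := by simp only [mem_Ioo] at hx; intro h; linarith [hx.2]
      have := (hasDerivAt_id x).div ((hasDerivAt_id x).const_sub 1) hne
      refine this.hasDerivWithinAt.congr_deriv ?_
      simp only [id]
      field_simp
      ring
    have hinj : InjOn (fun x : ℝ => x / (1 - x)) (Ioo 0 1) := by
      intro x hx y hy h
      simp only [mem_Ioo] at hx hy
      have hx1 : 1 - x ≠ 0 := by intro h'; linarith [hx.2]
      have hy1 : 1 - y ≠ 0 := by intro h'; linarith [hy.2]
      field_simp at h
      linarith
    have := integral_image_eq_integral_abs_deriv_smul measurableSet_Ioo hd hinj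
      (fun u => u ^ (a - 1) / (1 + u))
    rw [himg] at this
    rw [this]
    refine setIntegral_congr_fun measurableSet_Ioo fun x hx => ?_
    simp only [mem_Ioo] at hx
    have hx0 : (0:ℝ) < x := hx.1
    have hx1 : (0:ℝ) < 1 - x := by linarith [hx.2]
    have h1 : 1 + x / (1 - x) = 1 / (1 - x) := by field_simp; ring
    have e1 : (1 - x)⁻¹ ^ 2 = (1 - x) ^ (-2:ℝ) := by
      rw [Real.rpow_neg hx1.le, show (2:ℝ) = ((2:ℕ):ℝ) by norm_num,
        Real.rpow_natCast, inv_pow]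
    rw [smul_eq_mul, h1, Real.div_rpow hx0.le hx1.le]
    rw [abs_of_nonneg (by positivity : (0:ℝ) ≤ (1 - x)⁻¹ ^ 2)]
    calc (1 - x)⁻¹ ^ 2 * (x ^ (a - 1) / (1 - x) ^ (a - 1) / (1 / (1 - x)))
        = x ^ (a-1) * ((1-x) ^ (-2:ℝ) * ((1-x) ^ (a-1))⁻¹ * (1-x) ^ (1:ℝ)) := by
          rw [e1, Real.rpow_one]; field_simp
      _ = x ^ (a-1) * (1-x) ^ (-a) := by
          rw [← Real.rpow_neg hx1.le, ← Real.rpow_add hx1, ← Real.rpow_add hx1,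
            show (-2:ℝ) + -(a-1) + 1 = -a by ring]
  rw [key]
  -- identify with the complex Beta integral
  have hB := Complex.Gamma_mul_Gamma_eq_betaIntegral (s := (a:ℂ)) (t := ((1 - a : ℝ) : ℂ))
    (by simpa using ha) (by simpa using (by linarith : (0:ℝ) < 1 - a))
  have h2 : Complex.betaIntegral (a:ℂ) ((1 - a : ℝ) : ℂ)
      = ((∫ x in Ioo (0:ℝ) 1, x ^ (a - 1) * (1 - x) ^ (-a) : ℝ) : ℂ) := by
    rw [Complex.betaIntegral, intervalIntegral.integral_of_le zero_le_one,
      MeasureTheory.integral_Ioc_eq_integral_Ioo]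
    have hcongr : ∀ x ∈ Ioo (0:ℝ) 1,
        (x:ℂ) ^ ((a:ℂ) - 1) * (1 - (x:ℂ)) ^ (((1 - a : ℝ) : ℂ) - 1)
          = ((x ^ (a - 1) * (1 - x) ^ (-a) : ℝ) : ℂ) := by
      intro x hx
      simp only [mem_Ioo] at hx
      have hx0 : (0:ℝ) ≤ x := hx.1.le
      have hx1' : (0:ℝ) ≤ 1 - x := by linarith [hx.2]
      rw [Complex.ofReal_mul, Complex.ofReal_cpow hx0, Complex.ofReal_cpow hx1']
      push_cast
      ring_nf
    rw [setIntegral_congr_fun measurableSet_Ioo hcongr]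
    exact integral_ofReal
  have hsum : (a:ℂ) + ((1 - a : ℝ) : ℂ) = 1 := by push_cast; ring
  rw [hsum, Complex.Gamma_one, one_mul, h2, Complex.Gamma_ofReal, Complex.Gamma_ofReal,
    ← Complex.ofReal_mul] at hB
  exact (Complex.ofReal_injective hB).symm


lemma J_integrable {α : ℝ} (hα1 : 1 < α) (hα2 : α < 2) :
    IntegrableOn (fun s : ℝ => s ^ (α - 1) / (1 + s ^ 2)) (Ioi 0) := by
  have hmeas : Measurable fun s : ℝ => s ^ (α - 1) / (1 + s ^ 2) := by fun_prop
  have h1 : IntegrableOn (fun s : ℝ => s ^ (α - 1) / (1 + s ^ 2)) (Ioc 0 1) := by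
    have hbound : IntegrableOn (fun s : ℝ => s ^ (α - 1)) (Ioc 0 1) := by
      have := intervalIntegral.intervalIntegrable_rpow' (a := 0) (b := 1) (show (-1:ℝ) < α - 1 by linarith)
      rwa [intervalIntegrable_iff_integrableOn_Ioc_of_le zero_le_one] at this
    refine hbound.mono' hmeas.aestronglyMeasurable.restrict ?_
    filter_upwards [ae_restrict_mem measurableSet_Ioc] with s hs
    simp only [mem_Ioc] at hs
    have h0 : (0:ℝ) < s ^ (α - 1) := Real.rpow_pos_of_pos hs.1 _
    rw [Real.norm_eq_abs, abs_div, abs_of_pos (by positivity), abs_of_pos (by positivity)]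
    rw [div_le_iff₀ (by positivity)]
    nlinarith [sq_nonneg s]
  have h2 : IntegrableOn (fun s : ℝ => s ^ (α - 1) / (1 + s ^ 2)) (Ioi 1) := by
    have hbound : IntegrableOn (fun s : ℝ => s ^ (α - 3)) (Ioi 1) :=
      integrableOn_Ioi_rpow_of_lt (by linarith) zero_lt_one
    refine hbound.mono' hmeas.aestronglyMeasurable.restrict ?_
    filter_upwards [ae_restrict_mem measurableSet_Ioi] with s hs
    simp only [mem_Ioi] at hs
    have hs0 : (0:ℝ) < s := by linarith
    rw [Real.norm_eq_abs, abs_div, abs_of_pos (Real.rpow_pos_of_pos hs0 _),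
      abs_of_pos (by positivity), div_le_iff₀ (by positivity)]
    have : s ^ (α - 3) * s ^ 2 = s ^ (α - 1) := by
      rw [← Real.rpow_natCast s 2, ← Real.rpow_add hs0]
      congr 1
      ring
    nlinarith [Real.rpow_pos_of_pos hs0 (α - 3)]
  have : Ioc (0:ℝ) 1 ∪ Ioi 1 = Ioi 0 := Ioc_union_Ioi_eq_Ioi zero_le_one
  rw [← this]
  exact h1.union h2

lemma J_value {α : ℝ} (hα1 : 1 < α) (hα2 : α < 2)
    (beta : ∫ u in Ioi (0:ℝ), u ^ (α/2 - 1) / (1 + u) = Real.Gamma (α/2) * Real.Gamma (1 - α/2)) :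
    ∫ s in Ioi (0:ℝ), s ^ (α - 1) / (1 + s ^ 2)
      = Real.Gamma (α/2) * Real.Gamma (1 - α/2) / 2 := by
  have := integral_comp_rpow_Ioi_of_pos (g := fun u : ℝ => u ^ (α/2 - 1) / (1 + u))
    (p := 2) zero_lt_two
  rw [← beta, ← this, ← integral_div]
  refine setIntegral_congr_fun measurableSet_Ioi fun x hx => ?_
  simp only [mem_Ioi] at hx
  have hx2 : x ^ (2:ℝ) = x ^ 2 := by
    rw [show (2:ℝ) = ((2:ℕ):ℝ) by norm_num, Real.rpow_natCast]
  have hxx : (x ^ (2:ℝ)) ^ (α/2 - 1) = x ^ (α - 2) := by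
    rw [← Real.rpow_mul hx.le]
    congr 1
    ring
  simp only [smul_eq_mul]
  rw [hxx, hx2]
  have h21 : x ^ ((2:ℝ) - 1) = x := by
    norm_num
  rw [h21]
  rw [div_eq_mul_inv, div_eq_mul_inv]
  have hsplit : x * x ^ (α - 2) = x ^ (α - 1) := by
    nth_rewrite 1 [← Real.rpow_one x]
    rw [← Real.rpow_add hx]
    congr 1
    ring
  rw [← hsplit]
  ring

lemma fubini_key {α : ℝ} (hα1 : 1 < α) (hα2 : α < 2)
    (hJ : IntegrableOn (fun s : ℝ => s ^ (α - 1) / (1 + s ^ 2)) (Ioi 0)) :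
    ∫ t in Ioi (0:ℝ), (1 - Real.cos t) / t ^ (α + 1)
      = (∫ s in Ioi (0:ℝ), s ^ (α - 1) / (1 + s ^ 2)) / Real.Gamma (α + 1) := by
  set μ : Measure ℝ := volume.restrict (Ioi 0) with hμ
  set F : ℝ → ℝ → ℝ := fun s t => s ^ α * ((1 - Real.cos t) * Real.exp (-(s * t))) with hFdef
  have hΓpos : 0 < Real.Gamma (α + 1) := Real.Gamma_pos_of_pos (by linarith)
  have hFmeas : AEStronglyMeasurable (Function.uncurry F) (μ.prod μ) := by
    apply Measurable.aestronglyMeasurable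
    have : Function.uncurry F = fun p : ℝ × ℝ =>
        p.1 ^ α * ((1 - Real.cos p.2) * Real.exp (-(p.1 * p.2))) := rfl
    rw [this]
    fun_prop
  -- slicewise integral in t
  have hslice : ∀ s : ℝ, 0 < s → ∫ t, F s t ∂μ = s ^ (α - 1) / (1 + s ^ 2) := by
    intro s hs
    rw [hμ]
    rw [integral_const_mul, (laplace_one_sub_cos hs).2]
    rw [show s ^ α = s * s ^ (α - 1) by
      nth_rewrite 1 [show α = 1 + (α - 1) by ring]
      rw [Real.rpow_add hs, Real.rpow_one]]
    field_simp
    ring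
  have hnormslice : ∀ s : ℝ, 0 < s → ∫ t, ‖F s t‖ ∂μ = s ^ (α - 1) / (1 + s ^ 2) := by
    intro s hs
    rw [← hslice s hs]
    refine integral_congr_ae ?_
    filter_upwards [ae_restrict_mem measurableSet_Ioi] with t ht
    rw [Real.norm_eq_abs, abs_of_nonneg]
    have h1 : Real.cos t ≤ 1 := Real.cos_le_one t
    exact mul_nonneg (Real.rpow_nonneg hs.le α)
      (mul_nonneg (by linarith) (Real.exp_pos _).le)
  have hint : Integrable (Function.uncurry F) (μ.prod μ) := by
    rw [MeasureTheory.integrable_prod_iff hFmeas]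
    simp only [Function.uncurry_def]
    constructor
    · filter_upwards [ae_restrict_mem measurableSet_Ioi] with s hs
      have hs' : (0:ℝ) < s := hs
      exact ((laplace_one_sub_cos hs').1.const_mul _)
    · refine hJ.congr ?_
      filter_upwards [ae_restrict_mem measurableSet_Ioi] with s hs
      have hs' : (0:ℝ) < s := hs
      exact (hnormslice s hs').symm
  have hswap := MeasureTheory.integral_integral_swap (f := F) hint
  -- left side: ∫ s ∫ t F = J
  have hleft : ∫ s, ∫ t, F s t ∂μ ∂μ = ∫ s in Ioi (0:ℝ), s ^ (α - 1) / (1 + s ^ 2) := by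
    refine integral_congr_ae ?_
    filter_upwards [ae_restrict_mem measurableSet_Ioi] with s hs
    exact hslice s hs
  -- right side: ∫ t ∫ s F = Γ(α+1) * I
  have hright : ∫ t, ∫ s, F s t ∂μ ∂μ
      = Real.Gamma (α + 1) * ∫ t in Ioi (0:ℝ), (1 - Real.cos t) / t ^ (α + 1) := by
    rw [← integral_const_mul]
    refine integral_congr_ae ?_
    filter_upwards [ae_restrict_mem measurableSet_Ioi] with t ht
    have ht0 : (0:ℝ) < t := ht
    have hker : ∫ s, s ^ α * Real.exp (-(t * s)) ∂μ = (1 / t) ^ (α + 1) * Real.Gamma (α + 1) := by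
      rw [hμ]
      rw [← Real.integral_rpow_mul_exp_neg_mul_Ioi (by linarith : (0:ℝ) < α + 1) ht0]
      refine setIntegral_congr_fun measurableSet_Ioi fun s hs => ?_
      norm_num
    have : ∫ s, F s t ∂μ = (1 - Real.cos t) * ∫ s, s ^ α * Real.exp (-(t * s)) ∂μ := by
      rw [← integral_const_mul]
      refine integral_congr_ae ?_
      filter_upwards [ae_restrict_mem measurableSet_Ioi] with s hs
      simp only [hFdef]
      rw [mul_comm s t]
      ring
    rw [this, hker]
    rw [Real.div_rpow zero_le_one ht0.le, Real.one_rpow]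
    field_simp
  rw [hleft, hright] at hswap
  rw [hμ] at *
  rw [hswap]
  field_simp


lemma int_Ioi {α : ℝ} (hα1 : 1 < α) (hα2 : α < 2) (y : ℝ) :
    IntegrableOn (fun u : ℝ => (1 - Real.cos (u * y)) / u ^ (α + 1)) (Ioi 0) := by
  have hmeas : Measurable fun u : ℝ => (1 - Real.cos (u * y)) / u ^ (α + 1) := by fun_prop
  have h1 : IntegrableOn (fun u : ℝ => (1 - Real.cos (u * y)) / u ^ (α + 1)) (Ioc 0 1) := by
    have hbound : IntegrableOn (fun u : ℝ => y ^ 2 / 2 * u ^ (1 - α)) (Ioc 0 1) := by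
      have := intervalIntegral.intervalIntegrable_rpow' (a := 0) (b := 1)
        (show (-1:ℝ) < 1 - α by linarith)
      rw [intervalIntegrable_iff_integrableOn_Ioc_of_le zero_le_one] at this
      exact this.const_mul _
    refine hbound.mono' hmeas.aestronglyMeasurable.restrict ?_
    filter_upwards [ae_restrict_mem measurableSet_Ioc] with u hu
    simp only [mem_Ioc] at hu
    have hu0 : (0:ℝ) < u := hu.1
    have hup : (0:ℝ) < u ^ (α + 1) := Real.rpow_pos_of_pos hu0 _
    have hcos : 0 ≤ 1 - Real.cos (u * y) := by linarith [Real.cos_le_one (u * y)]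
    have hcos2 : 1 - Real.cos (u * y) ≤ (u * y) ^ 2 / 2 := by
      linarith [Real.one_sub_sq_div_two_le_cos (x := u * y)]
    rw [Real.norm_eq_abs, abs_of_nonneg (by positivity)]
    rw [div_le_iff₀ hup]
    have hexp : u ^ (1 - α) * u ^ (α + 1) = u ^ 2 := by
      rw [← Real.rpow_add hu0, ← Real.rpow_natCast u 2]
      congr 1
      push_cast
      ring
    calc (1 - Real.cos (u * y)) ≤ (u * y) ^ 2 / 2 := hcos2
      _ = y ^ 2 / 2 * u ^ 2 := by ring
      _ = y ^ 2 / 2 * (u ^ (1 - α) * u ^ (α + 1)) := by rw [hexp]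
      _ = y ^ 2 / 2 * u ^ (1 - α) * u ^ (α + 1) := by ring
  have h2 : IntegrableOn (fun u : ℝ => (1 - Real.cos (u * y)) / u ^ (α + 1)) (Ioi 1) := by
    have hbound : IntegrableOn (fun u : ℝ => 2 * u ^ (-(α + 1))) (Ioi 1) :=
      (integrableOn_Ioi_rpow_of_lt (by linarith) zero_lt_one).const_mul 2
    refine hbound.mono' hmeas.aestronglyMeasurable.restrict ?_
    filter_upwards [ae_restrict_mem measurableSet_Ioi] with u hu
    simp only [mem_Ioi] at hu
    have hu0 : (0:ℝ) < u := by linarith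
    have hup : (0:ℝ) < u ^ (α + 1) := Real.rpow_pos_of_pos hu0 _
    have hcos : 0 ≤ 1 - Real.cos (u * y) := by linarith [Real.cos_le_one (u * y)]
    rw [Real.norm_eq_abs, abs_of_nonneg (by positivity)]
    rw [Real.rpow_neg hu0.le, div_le_iff₀ hup, mul_assoc, inv_mul_cancel₀ hup.ne']
    have := Real.neg_one_le_cos (u * y)
    linarith
  have : Ioc (0:ℝ) 1 ∪ Ioi 1 = Ioi 0 := Ioc_union_Ioi_eq_Ioi zero_le_one
  rw [← this]
  exact h1.union h2

lemma cos_abs_mul (x y : ℝ) : Real.cos (|x| * y) = Real.cos (x * y) := by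
  rcases abs_choice x with h | h
  · rw [h]
  · rw [h, neg_mul, Real.cos_neg]

lemma integrable_full {α : ℝ} (hα1 : 1 < α) (hα2 : α < 2) (y : ℝ) :
    Integrable (fun u : ℝ => (1 - Real.cos (u * y)) / |u| ^ (α + 1)) := by
  have hIoi : IntegrableOn (fun u : ℝ => (1 - Real.cos (u * y)) / |u| ^ (α + 1)) (Ioi 0) := by
    refine (int_Ioi hα1 hα2 y).congr_fun (fun u hu => ?_) measurableSet_Ioi
    rw [abs_of_pos hu]
  have hIic : IntegrableOn (fun u : ℝ => (1 - Real.cos (u * y)) / |u| ^ (α + 1)) (Iic 0) := by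
    rw [← Measure.map_neg_eq_self (volume : Measure ℝ)]
    have m : MeasurableEmbedding fun x : ℝ => -x := (Homeomorph.neg ℝ).measurableEmbedding
    rw [m.integrableOn_map_iff]
    simp_rw [Function.comp_def, neg_mul, Real.cos_neg, abs_neg, neg_preimage, neg_Iic, neg_zero]
    exact (integrableOn_Ici_iff_integrableOn_Ioi enorm_ne_top).mpr hIoi
  have : Iic (0:ℝ) ∪ Ioi 0 = univ := Iic_union_Ioi
  have := hIic.union hIoi
  rwa [Iic_union_Ioi, integrableOn_univ] at this


lemma scale_Ioi {α : ℝ} {y : ℝ} (hy : y ≠ 0) :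
    ∫ u in Ioi (0:ℝ), (1 - Real.cos (u * y)) / u ^ (α + 1)
      = |y| ^ α * ∫ t in Ioi (0:ℝ), (1 - Real.cos t) / t ^ (α + 1) := by
  have hy0 : 0 < |y| := abs_pos.mpr hy
  have hsub := integral_comp_mul_right_Ioi (g := fun t : ℝ => (1 - Real.cos t) / t ^ (α + 1))
    (a := 0) hy0
  rw [zero_mul] at hsub
  have hcongr : ∀ u ∈ Ioi (0:ℝ),
      (1 - Real.cos (u * y)) / u ^ (α + 1)
        = |y| ^ (α + 1) * ((1 - Real.cos (u * |y|)) / (u * |y|) ^ (α + 1)) := by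
    intro u hu
    have hu0 : (0:ℝ) < u := hu
    have hc : Real.cos (u * |y|) = Real.cos (u * y) := by
      rcases abs_choice y with h | h
      · rw [h]
      · rw [h, mul_neg, Real.cos_neg]
    rw [hc, Real.mul_rpow hu0.le hy0.le]
    have h1 : (0:ℝ) < u ^ (α+1) := Real.rpow_pos_of_pos hu0 _
    have h2 : (0:ℝ) < |y| ^ (α+1) := Real.rpow_pos_of_pos hy0 _
    field_simp
  rw [setIntegral_congr_fun measurableSet_Ioi hcongr, integral_const_mul, hsub,
    smul_eq_mul]
  rw [← mul_assoc]
  congr 1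
  rw [Real.rpow_add hy0, Real.rpow_one]
  field_simp


lemma c_pos {α : ℝ} (hα1 : 1 < α) (hα2 : α < 2) :
    0 < -(α * (α - 1)) / (Real.Gamma (2 - α) * Real.cos (Real.pi * α / 2)) := by
  have hG : 0 < Real.Gamma (2 - α) := Real.Gamma_pos_of_pos (by linarith)
  have hC : Real.cos (Real.pi * α / 2) < 0 := by
    apply Real.cos_neg_of_pi_div_two_lt_of_lt
    · nlinarith [Real.pi_pos]
    · nlinarith [Real.pi_pos]
  have hnum : -(α * (α - 1)) < 0 := by nlinarith
  exact div_pos_of_neg_of_neg hnum (by nlinarith)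

lemma c_mul_I {α : ℝ} (hα1 : 1 < α) (hα2 : α < 2) :
    (-(α * (α - 1)) / (Real.Gamma (2 - α) * Real.cos (Real.pi * α / 2))) *
      (Real.Gamma (α / 2) * Real.Gamma (1 - α / 2) / 2 / Real.Gamma (α + 1)) = 1 := by
  have hpi := Real.pi_pos
  set S := Real.sin (Real.pi * α / 2) with hS
  set C := Real.cos (Real.pi * α / 2) with hC
  have hSpos : 0 < S := by
    apply Real.sin_pos_of_pos_of_lt_pi <;> nlinarith
  have hCneg : C < 0 := by
    apply Real.cos_neg_of_pi_div_two_lt_of_lt <;> nlinarith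
  have hGα : 0 < Real.Gamma α := Real.Gamma_pos_of_pos (by linarith)
  have h1 : Real.Gamma (α + 1) = α * Real.Gamma α := Real.Gamma_add_one (by positivity)
  have h2 : Real.Gamma (2 - α) = (1 - α) * Real.Gamma (1 - α) := by
    have := Real.Gamma_add_one (s := 1 - α) (by intro h; apply (show α ≠ 1 by linarith); linarith)
    rw [show (1 - α) + 1 = 2 - α by ring] at this
    exact this
  have hsin2 : Real.sin (Real.pi * α) = 2 * S * C := by
    rw [show Real.pi * α = 2 * (Real.pi * α / 2) by ring, Real.sin_two_mul]
  have h3 : Real.Gamma α * Real.Gamma (1 - α) = Real.pi / Real.sin (Real.pi * α) :=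
    Real.Gamma_mul_Gamma_one_sub α
  have h5 : Real.Gamma (α / 2) * Real.Gamma (1 - α / 2) = Real.pi / S := by
    have := Real.Gamma_mul_Gamma_one_sub (α / 2)
    rw [show Real.pi * (α / 2) = Real.pi * α / 2 by ring] at this
    exact this
  have hsinne : Real.sin (Real.pi * α) ≠ 0 := by
    rw [hsin2]; nlinarith
  have hH : Real.Gamma (1 - α) = Real.pi / (Real.sin (Real.pi * α) * Real.Gamma α) := by
    field_simp at h3 ⊢
    linarith [h3]
  rw [h1, h2, h5, hH, hsin2]
  have hα0 : α ≠ 0 := by linarith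
  have hα1' : (1:ℝ) - α ≠ 0 := by intro h; apply (show α ≠ 1 by linarith); linarith
  field_simp
  rw [mul_div_assoc, div_self (ne_of_lt hCneg)]; ring


/-- For every `α ∈ (1,2)`, the constant `c_α = -α(α-1)/(Γ(2-α) cos(πα/2))` is strictly
positive, and for every `y ∈ ℝ` the integral `∫ (1 - cos (u y))/|u|^(α+1) du` converges
absolutely and `c_α · ∫ (1 - cos (u y))/|u|^(α+1) du = 2 |y|^α`. -/
theorem stmt0 (α : ℝ) (hα1 : 1 < α) (hα2 : α < 2) :
    0 < -(α * (α - 1)) / (Real.Gamma (2 - α) * Real.cos (Real.pi * α / 2)) ∧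
    ∀ y : ℝ,
      Integrable (fun u : ℝ => (1 - Real.cos (u * y)) / |u| ^ (α + 1)) ∧
      (-(α * (α - 1)) / (Real.Gamma (2 - α) * Real.cos (Real.pi * α / 2))) *
          (∫ u : ℝ, (1 - Real.cos (u * y)) / |u| ^ (α + 1)) = 2 * |y| ^ α := by
  refine ⟨c_pos hα1 hα2, fun y => ⟨integrable_full hα1 hα2 y, ?_⟩⟩
  have hI : ∫ t in Ioi (0:ℝ), (1 - Real.cos t) / t ^ (α + 1)
      = Real.Gamma (α / 2) * Real.Gamma (1 - α / 2) / 2 / Real.Gamma (α + 1) := by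
    rw [fubini_key hα1 hα2 (J_integrable hα1 hα2),
      J_value hα1 hα2 (beta_Ioi (by linarith) (by linarith))]
  have habs : (∫ u : ℝ, (1 - Real.cos (u * y)) / |u| ^ (α + 1))
      = 2 * ∫ u in Ioi (0:ℝ), (1 - Real.cos (u * y)) / u ^ (α + 1) := by
    have hfun : (fun u : ℝ => (1 - Real.cos (u * y)) / |u| ^ (α + 1))
        = fun u : ℝ => (fun t : ℝ => (1 - Real.cos (t * y)) / |t| ^ (α + 1)) |u| := by
      funext x
      simp only
      rw [abs_abs, cos_abs_mul]
    rw [hfun, integral_comp_abs (f := fun t : ℝ => (1 - Real.cos (t * y)) / |t| ^ (α + 1))]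
    congr 1
    refine setIntegral_congr_fun measurableSet_Ioi fun u hu => ?_
    rw [abs_of_pos hu]
  by_cases hy : y = 0
  · subst hy
    simp only [mul_zero, Real.cos_zero, sub_self, zero_div, integral_zero, abs_zero]
    rw [Real.zero_rpow (by linarith : α ≠ 0)]
    norm_num
  · rw [habs, scale_Ioi hy, hI]
    have hc := c_mul_I hα1 hα2
    calc (-(α * (α - 1)) / (Real.Gamma (2 - α) * Real.cos (Real.pi * α / 2))) *
          (2 * (|y| ^ α * (Real.Gamma (α / 2) * Real.Gamma (1 - α / 2) / 2 / Real.Gamma (α + 1))))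
        = 2 * |y| ^ α * ((-(α * (α - 1)) / (Real.Gamma (2 - α) * Real.cos (Real.pi * α / 2))) *
            (Real.Gamma (α / 2) * Real.Gamma (1 - α / 2) / 2 / Real.Gamma (α + 1))) := by ring
      _ = 2 * |y| ^ α := by rw [hc, mul_one]
end

section
/- For every α ∈ (1,2), the integral ∫_ℝ (1 − K(v))/|v|^{α+1} dv is finite and strictly positive; consequently ψ(α) := c_α · ∫_ℝ (1 − K(v))/|v|^{α+1} dv is strictly positive. -/
open MeasureTheory Real

/-- The smooth truncation kernel `K`. -/
noncomputable def K (x : ℝ) : ℝ :=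
  if |x| ≤ 1 then 1
  else if |x| < 2 then (1 + Real.exp (1 / (2 - |x|) + 1 / (1 - |x|)))⁻¹
  else 0

lemma K_nonneg (x : ℝ) : 0 ≤ K x := by
  unfold K
  split_ifs with h1 h2
  · norm_num
  · positivity
  · exact le_refl 0

lemma K_le_one (x : ℝ) : K x ≤ 1 := by
  unfold K
  split_ifs with h1 h2
  · exact le_refl 1
  · rw [inv_le_one_iff₀]
    right
    nlinarith [Real.exp_pos (1 / (2 - |x|) + 1 / (1 - |x|))]
  · norm_num

lemma K_measurable : Measurable K := by
  unfold K
  apply Measurable.ite (measurableSet_le measurable_abs measurable_const) measurable_const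
  apply Measurable.ite (measurableSet_lt measurable_abs measurable_const) _ measurable_const
  measurability

/-- For every `α ∈ (1,2)`, the integral `∫ (1 - K v)/|v|^(α+1) dv` is finite and strictly
positive; consequently `ψ(α) = c_α ∫ (1 - K v)/|v|^(α+1) dv > 0`, where
`c_α = -α(α-1)/(Γ(2-α) cos(πα/2)) > 0`. -/
theorem stmt3 (α : ℝ) (hα1 : 1 < α) (hα2 : α < 2) :
    Integrable (fun v : ℝ => (1 - K v) / |v| ^ (α + 1)) ∧
    0 < ∫ v : ℝ, (1 - K v) / |v| ^ (α + 1) ∧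
    0 < (-(α * (α - 1)) / (Real.Gamma (2 - α) * Real.cos (Real.pi * α / 2))) *
        ∫ v : ℝ, (1 - K v) / |v| ^ (α + 1) := by
  set f : ℝ → ℝ := fun v : ℝ => (1 - K v) / |v| ^ (α + 1) with hf
  set h : ℝ → ℝ := fun v : ℝ => |v| ^ (-(α + 1)) with hh
  have hexp : -(α + 1) < -1 := by linarith
  -- integrability of the dominating function on the two tails
  have hIci : IntegrableOn h (Set.Ici (1 : ℝ)) := by
    rw [hh, integrableOn_Ici_iff_integrableOn_Ioi]
    exact (integrableOn_Ioi_rpow_of_lt hexp one_pos).congr_fun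
      (fun x hx => by rw [abs_of_pos (lt_trans one_pos hx)]) measurableSet_Ioi
  have hIic : IntegrableOn h (Set.Iic (-1 : ℝ)) := by
    have heq : Set.indicator (Set.Iic (-1 : ℝ)) h
        = fun x => Set.indicator (Set.Ici (1 : ℝ)) h (-x) := by
      funext x
      simp only [Set.indicator, Set.mem_Iic, Set.mem_Ici, hh, abs_neg]
      congr 1
      simp [le_neg]
    have hI : Integrable (Set.indicator (Set.Iic (-1 : ℝ)) h) := by
      rw [heq]
      exact ((integrable_indicator_iff measurableSet_Ici).mpr hIci).comp_neg
    exact (integrable_indicator_iff measurableSet_Iic).mp hI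
  have hset : {x : ℝ | 1 ≤ |x|} = Set.Iic (-1 : ℝ) ∪ Set.Ici (1 : ℝ) := by
    ext x
    simp only [Set.mem_setOf_eq, Set.mem_union, Set.mem_Iic, Set.mem_Ici, le_abs, le_neg]
    tauto
  have hsmeas : MeasurableSet {x : ℝ | 1 ≤ |x|} := by
    rw [hset]; exact measurableSet_Iic.union measurableSet_Ici
  set g : ℝ → ℝ := Set.indicator {x : ℝ | 1 ≤ |x|} h with hg
  have hg_int : Integrable g := by
    rw [hg, integrable_indicator_iff hsmeas, hset]
    exact hIic.union hIci
  have hf_nonneg : ∀ v, 0 ≤ f v := fun v =>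
    div_nonneg (by linarith [K_le_one v]) (Real.rpow_nonneg (abs_nonneg v) _)
  have hf_meas : AEStronglyMeasurable f volume := by
    apply Measurable.aestronglyMeasurable
    apply (measurable_const.sub K_measurable).div
    fun_prop
  have hbound : ∀ v, ‖f v‖ ≤ g v := by
    intro v
    rw [Real.norm_of_nonneg (hf_nonneg v), hg, Set.indicator]
    split_ifs with hv
    · have hvpos : (0 : ℝ) < |v| := lt_of_lt_of_le one_pos hv
      show f v ≤ |v| ^ (-(α + 1))
      rw [Real.rpow_neg (abs_nonneg v)]
      rw [hf]
      rw [div_le_iff₀ (Real.rpow_pos_of_pos hvpos _)]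
      rw [inv_mul_cancel₀ (ne_of_gt (Real.rpow_pos_of_pos hvpos _))]
      linarith [K_nonneg v]
    · have : |v| ≤ 1 := le_of_not_ge (fun h' => hv h')
      have : K v = 1 := by unfold K; rw [if_pos this]
      simp [hf, this]
  have hInt : Integrable f := Integrable.mono' hg_int hf_meas (Filter.Eventually.of_forall hbound)
  have hpos : 0 < ∫ v : ℝ, f v := by
    rw [integral_pos_iff_support_of_nonneg hf_nonneg hInt]
    have hsub : Set.Ici (2 : ℝ) ⊆ Function.support f := by
      intro v hv
      have hv2 : (2 : ℝ) ≤ v := hv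
      have habs : |v| = v := abs_of_pos (by linarith)
      have hK : K v = 0 := by
        unfold K
        rw [if_neg (by rw [habs]; linarith), if_neg (by rw [habs]; linarith)]
      have : f v = 1 / |v| ^ (α + 1) := by rw [hf]; simp [hK]
      rw [Function.mem_support, this]
      positivity
    calc (0 : ENNReal) < volume (Set.Ici (2 : ℝ)) := by simp [Real.volume_Ici]
      _ ≤ volume (Function.support f) := measure_mono hsub
  have hc : 0 < (-(α * (α - 1)) / (Real.Gamma (2 - α) * Real.cos (Real.pi * α / 2))) := by
    have hnum : -(α * (α - 1)) < 0 := by nlinarith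
    have hGamma : 0 < Real.Gamma (2 - α) := Real.Gamma_pos_of_pos (by linarith)
    have hcos : Real.cos (Real.pi * α / 2) < 0 := by
      apply Real.cos_neg_of_pi_div_two_lt_of_lt
      · rw [div_lt_div_iff₀ two_pos two_pos]
        nlinarith [Real.pi_pos]
      · nlinarith [Real.pi_pos]
    exact div_pos_of_neg_of_neg hnum (mul_neg_of_pos_of_neg hGamma hcos)
  exact ⟨hInt, hpos, mul_pos hc hpos⟩
end

section
/- Let a > 0, σ > 0, δ̄ > 0, b ∈ ℝ, α ∈ (1,2), and let 1 ≤ p < 2a/σ². Define R(z) = (σ²/2)z² + (δ̄^α/α)z^α + b·z for z > 0. Then there exist ε ∈ (0,1) and u₀ ≥ 1 such that R(z) > 0 for all z ≥ u₀^{ε}, and the integral ∫_{u₀}^{∞} u^{p−1} · exp( − ∫_{u^{ε}}^{u} (a·z)/R(z) dz ) du is finite. -/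
open MeasureTheory Real

set_option maxHeartbeats 1000000 in
/-- For the stable CIR branching mechanism `R(z) = (σ²/2)z² + (δ̄^α/α)z^α + bz` and any
`1 ≤ p < 2a/σ²`, there are `ε ∈ (0,1)` and `u₀ ≥ 1` with `R > 0` on `[u₀^ε, ∞)` and
`∫_{u₀}^∞ u^(p-1) exp(-∫_{u^ε}^u a z / R(z) dz) du < ∞`. -/
theorem stmt8 (a σ δ b α p : ℝ) (ha : 0 < a) (hσ : 0 < σ) (hδ : 0 < δ)
    (hα1 : 1 < α) (hα2 : α < 2) (hp1 : 1 ≤ p) (hp2 : p < 2 * a / σ ^ 2) :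
    ∃ ε ∈ Set.Ioo (0 : ℝ) 1, ∃ u₀ : ℝ, 1 ≤ u₀ ∧
      (∀ z : ℝ, u₀ ^ ε ≤ z → 0 < σ ^ 2 / 2 * z ^ 2 + δ ^ α / α * z ^ α + b * z) ∧
      IntegrableOn
        (fun u : ℝ => u ^ (p - 1) *
          Real.exp (-(∫ z in u ^ ε..u,
            a * z / (σ ^ 2 / 2 * z ^ 2 + δ ^ α / α * z ^ α + b * z))))
        (Set.Ici u₀) := by
  have hσ2 : (0:ℝ) < σ ^ 2 := by positivity
  set R : ℝ → ℝ := fun z => σ ^ 2 / 2 * z ^ 2 + δ ^ α / α * z ^ α + b * z with hRdef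
  set c : ℝ := (p + 2 * a / σ ^ 2) / 2 with hcdef
  have hpc : p < c := by rw [hcdef]; linarith
  have hcA : c < 2 * a / σ ^ 2 := by rw [hcdef]; linarith
  have hc0 : 0 < c := by linarith
  set ε : ℝ := (c - p) / (2 * c) with hεdef
  have hε0 : 0 < ε := by apply div_pos <;> linarith
  have hε1 : ε < 1 := by
    rw [hεdef, div_lt_one (by linarith)]; linarith
  have hq : p < c * (1 - ε) := by
    have h : c * (1 - ε) = (c + p) / 2 := by
      rw [hεdef]; field_simp; ring
    rw [h]; linarith
  set η : ℝ := (a / c - σ ^ 2 / 2) / 2 with hηdef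
  have hac : σ ^ 2 / 2 < a / c := by
    have h1 : c * σ ^ 2 < 2 * a := (lt_div_iff₀ hσ2).mp hcA
    rw [div_lt_div_iff₀ (by norm_num) hc0]
    nlinarith
  have hη : 0 < η := by rw [hηdef]; linarith
  have hηid : σ ^ 2 / 2 + 2 * η = a / c := by rw [hηdef]; ring
  have hδα : 0 < δ ^ α / α := div_pos (rpow_pos_of_pos hδ α) (by linarith)
  clear_value c
  clear hcdef hεdef hcA
  set Z₀ : ℝ := max (max 1 (1 + 2 * |b| / σ ^ 2))
      (max (|b| / η) (((δ ^ α / α) / η) ^ (1 / (2 - α)))) with hZdef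
  have hZ1 : (1:ℝ) ≤ Z₀ := le_max_of_le_left (le_max_left _ _)
  have hZ0 : (0:ℝ) < Z₀ := by linarith
  -- positivity of R above Z₀
  have key1 : ∀ z : ℝ, Z₀ ≤ z → 0 < R z := by
    intro z hz
    have hz1 : (1:ℝ) ≤ z := hZ1.trans hz
    have hz0 : (0:ℝ) < z := by linarith
    have hb : 1 + 2 * |b| / σ ^ 2 ≤ z :=
      le_trans (le_max_of_le_left (le_max_right _ _)) hz
    have hb2 : 2 * |b| ≤ (z - 1) * σ ^ 2 := by
      have := (div_le_iff₀ hσ2).mp (by linarith : 2 * |b| / σ ^ 2 ≤ z - 1)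
      linarith
    have hb' : |b| ≤ σ ^ 2 / 2 * (z - 1) := by nlinarith
    have hzα : 0 < z ^ α := rpow_pos_of_pos hz0 α
    have P1 : 0 < δ ^ α / α * z ^ α := mul_pos hδα hzα
    have P2 : -|b| * z ≤ b * z := mul_le_mul_of_nonneg_right (neg_abs_le b) hz0.le
    have P3 : |b| * z ≤ σ ^ 2 / 2 * (z - 1) * z := mul_le_mul_of_nonneg_right hb' hz0.le
    have P4 : 0 < σ ^ 2 / 2 * z := mul_pos (by linarith) hz0
    show 0 < σ ^ 2 / 2 * z ^ 2 + δ ^ α / α * z ^ α + b * z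
    nlinarith
  -- upper bound on R above Z₀
  have key2 : ∀ z : ℝ, Z₀ ≤ z → R z ≤ a / c * z ^ 2 := by
    intro z hz
    have hz1 : (1:ℝ) ≤ z := hZ1.trans hz
    have hz0 : (0:ℝ) < z := by linarith
    -- b z ≤ η z²
    have hb : |b| / η ≤ z := le_trans (le_max_of_le_right (le_max_left _ _)) hz
    have hb1 : |b| ≤ η * z := by
      have := (div_le_iff₀ hη).mp hb; linarith
    have hbz : b * z ≤ η * z ^ 2 := by nlinarith [le_abs_self b]
    -- δ^α/α z^α ≤ η z²
    have hX : 0 < (δ ^ α / α) / η := div_pos hδα hη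
    have hW0 : 0 < ((δ ^ α / α) / η) ^ (1 / (2 - α)) := rpow_pos_of_pos hX _
    have hWz : ((δ ^ α / α) / η) ^ (1 / (2 - α)) ≤ z :=
      le_trans (le_max_of_le_right (le_max_right _ _)) hz
    have hza2 : z ^ (α - 2) ≤ (((δ ^ α / α) / η) ^ (1 / (2 - α))) ^ (α - 2) :=
      rpow_le_rpow_of_nonpos hW0 hWz (by linarith)
    have hWeq : (((δ ^ α / α) / η) ^ (1 / (2 - α))) ^ (α - 2) = η / (δ ^ α / α) := by
      rw [← Real.rpow_mul hX.le]
      have h2α : (2:ℝ) - α ≠ 0 := by linarith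
      have : 1 / (2 - α) * (α - 2) = -1 := by field_simp; ring
      rw [this, Real.rpow_neg_one, inv_div]
    have hzsplit : z ^ α = z ^ (α - 2) * z ^ 2 := by
      rw [← Real.rpow_two, ← Real.rpow_add hz0]; ring_nf
    have hαz : δ ^ α / α * z ^ α ≤ η * z ^ 2 := by
      rw [hzsplit, ← mul_assoc]
      apply mul_le_mul_of_nonneg_right _ (by positivity)
      calc δ ^ α / α * z ^ (α - 2) ≤ δ ^ α / α * (η / (δ ^ α / α)) := by
            rw [← hWeq]; exact mul_le_mul_of_nonneg_left hza2 hδα.le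
        _ = η := by field_simp
    show σ ^ 2 / 2 * z ^ 2 + δ ^ α / α * z ^ α + b * z ≤ a / c * z ^ 2
    nlinarith [sq_nonneg z, hηid]
  clear_value Z₀
  clear hZdef
  -- choice of u₀
  set u₀ : ℝ := Z₀ ^ (1 / ε) with hu₀def
  have hu₀1 : (1:ℝ) ≤ u₀ := by
    have := Real.rpow_le_rpow_of_exponent_le hZ1 (by positivity : (0:ℝ) ≤ 1 / ε)
    rwa [Real.rpow_zero] at this
  have hu₀0 : (0:ℝ) < u₀ := by linarith
  have hu₀ε : ∀ u : ℝ, u₀ ≤ u → Z₀ ≤ u ^ ε := by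
    intro u hu
    have h1 : u₀ ^ ε ≤ u ^ ε := Real.rpow_le_rpow hu₀0.le hu hε0.le
    have h2 : u₀ ^ ε = Z₀ := by
      rw [hu₀def, ← Real.rpow_mul hZ0.le, one_div_mul_cancel hε0.ne', Real.rpow_one]
    linarith
  have hεle : ∀ u : ℝ, u₀ ≤ u → u ^ ε ≤ u := by
    intro u hu
    have h1 : (1:ℝ) ≤ u := hu₀1.trans hu
    have := Real.rpow_le_rpow_of_exponent_le h1 hε1.le
    rwa [Real.rpow_one] at this
  clear_value u₀
  refine ⟨ε, ⟨hε0, hε1⟩, u₀, hu₀1, fun z hz => key1 z ((hu₀ε u₀ le_rfl).trans hz), ?_⟩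
  -- continuous modification of the integrand of the inner integral
  set g : ℝ → ℝ := fun z => a * z / R z with hgdef
  set gt : ℝ → ℝ := fun z => a * max z Z₀ / R (max z Z₀) with hgtdef
  have hmaxpos : ∀ z : ℝ, (0:ℝ) < max z Z₀ := fun z => lt_of_lt_of_le hZ0 (le_max_right _ _)
  have hRmax : ∀ z : ℝ, 0 < R (max z Z₀) := fun z => key1 _ (le_max_right _ _)
  have hmaxcont : Continuous fun z : ℝ => max z Z₀ := continuous_id.max continuous_const
  have hgtcont : Continuous gt := by
    rw [hgtdef]
    apply Continuous.div (continuous_const.mul hmaxcont)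
    · simp only [hRdef]
      exact ((continuous_const.mul (hmaxcont.pow 2)).add
        (continuous_const.mul (hmaxcont.rpow_const fun z => Or.inl (hmaxpos z).ne'))).add
        (continuous_const.mul hmaxcont)
    · exact fun z => (hRmax z).ne'
  set G : ℝ → ℝ := fun t => ∫ z in Z₀..t, gt z with hGdef
  have hGcont : Continuous G :=
    intervalIntegral.continuous_primitive (fun x y => hgtcont.intervalIntegrable x y) Z₀
  -- identify the inner integral
  have hI : ∀ u : ℝ, u₀ ≤ u → (∫ z in u ^ ε..u, g z) = G u - G (u ^ ε) := by
    intro u hu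
    have h1 : u ^ ε ≤ u := hεle u hu
    have h2 : Z₀ ≤ u ^ ε := hu₀ε u hu
    have heq : Set.EqOn g gt (Set.uIcc (u ^ ε) u) := by
      intro z hz
      rw [Set.uIcc_of_le h1] at hz
      have : max z Z₀ = z := max_eq_left (h2.trans hz.1)
      simp only [hgdef, hgtdef, this]
    rw [intervalIntegral.integral_congr heq, hGdef]
    rw [← intervalIntegral.integral_interval_sub_left
      (hgtcont.intervalIntegrable Z₀ u) (hgtcont.intervalIntegrable Z₀ (u ^ ε))]
  -- pointwise bound
  set r : ℝ := p - 1 - c * (1 - ε) with hrdef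
  have hr : r < -1 := by rw [hrdef]; linarith
  have hbound : ∀ u ∈ Set.Ici u₀,
      ‖u ^ (p - 1) * Real.exp (-(∫ z in u ^ ε..u, g z))‖ ≤ u ^ r := by
    intro u hu
    rw [Set.mem_Ici] at hu
    have hu1 : (1:ℝ) ≤ u := hu₀1.trans hu
    have hu0 : (0:ℝ) < u := by linarith
    have h1 : u ^ ε ≤ u := hεle u hu
    have h2 : Z₀ ≤ u ^ ε := hu₀ε u hu
    have hεpos : (0:ℝ) < u ^ ε := lt_of_lt_of_le hZ0 h2
    -- lower bound on the inner integral
    have hmono : (∫ z in u ^ ε..u, c * (1 / z)) ≤ ∫ z in u ^ ε..u, g z := by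
      apply intervalIntegral.integral_mono_on h1
      · apply ContinuousOn.intervalIntegrable
        apply continuousOn_const.mul (continuousOn_const.div continuousOn_id _)
        intro z hz
        rw [Set.uIcc_of_le h1] at hz
        have : (0:ℝ) < z := lt_of_lt_of_le hεpos hz.1
        exact this.ne'
      · apply ContinuousOn.intervalIntegrable
        have hRcont : ContinuousOn R (Set.uIcc (u ^ ε) u) := by
          simp only [hRdef]
          refine ((continuousOn_const.mul (continuousOn_id.pow 2)).add
            (continuousOn_const.mul (ContinuousOn.rpow_const continuousOn_id
              fun z hz => Or.inl ?_))).add (continuousOn_const.mul continuousOn_id)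
          rw [Set.uIcc_of_le h1] at hz
          exact (lt_of_lt_of_le hεpos hz.1).ne'
        refine (continuousOn_const.mul continuousOn_id).div hRcont fun z hz => ?_
        rw [Set.uIcc_of_le h1] at hz
        exact (key1 z (h2.trans hz.1)).ne'
      · intro z hz
        have hZz : Z₀ ≤ z := h2.trans hz.1
        have hz0 : (0:ℝ) < z := lt_of_lt_of_le hZ0 hZz
        have hR0 := key1 z hZz
        have hRle := key2 z hZz
        rw [hgdef]
        show c * (1 / z) ≤ a * z / R z
        rw [mul_one_div, div_le_div_iff₀ hz0 hR0]
        have h3 : c * R z ≤ c * (a / c * z ^ 2) := mul_le_mul_of_nonneg_left hRle hc0.le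
        have h4 : c * (a / c * z ^ 2) = a * (z * z) := by
          rw [show c * (a / c * z ^ 2) = c / c * a * z ^ 2 by ring, div_self hc0.ne']; ring
        exact h3.trans_eq (h4.trans (mul_assoc a z z).symm)
    have hval : (∫ z in u ^ ε..u, c * (1 / z)) = c * (1 - ε) * Real.log u := by
      rw [intervalIntegral.integral_const_mul, integral_one_div]
      · rw [Real.log_div hu0.ne' hεpos.ne', Real.log_rpow hu0]; ring
      · rw [Set.uIcc_of_le h1]
        rintro ⟨hz1, -⟩
        linarith
    have hIlb : c * (1 - ε) * Real.log u ≤ ∫ z in u ^ ε..u, g z := by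
      rw [← hval]; exact hmono
    have hexp : Real.exp (-(∫ z in u ^ ε..u, g z)) ≤ u ^ (-(c * (1 - ε))) := by
      have hd : u ^ (-(c * (1 - ε))) = Real.exp (Real.log u * -(c * (1 - ε))) :=
        Real.rpow_def_of_pos hu0 _
      rw [hd]
      exact Real.exp_le_exp.mpr (by nlinarith)
    have hfnn : (0:ℝ) ≤ u ^ (p - 1) := Real.rpow_nonneg hu0.le _
    rw [Real.norm_eq_abs, abs_of_nonneg (mul_nonneg hfnn (Real.exp_pos _).le)]
    calc u ^ (p - 1) * Real.exp (-(∫ z in u ^ ε..u, g z))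
        ≤ u ^ (p - 1) * u ^ (-(c * (1 - ε))) := mul_le_mul_of_nonneg_left hexp hfnn
      _ = u ^ r := by
          rw [← Real.rpow_add hu0, hrdef]; ring_nf
  -- conclude
  have hint : IntegrableOn (fun u : ℝ => u ^ r) (Set.Ici u₀) := by
    rw [integrableOn_Ici_iff_integrableOn_Ioi]
    exact integrableOn_Ioi_rpow_of_lt hr hu₀0
  have hfcont : ContinuousOn
      (fun u : ℝ => u ^ (p - 1) * Real.exp (-(∫ z in u ^ ε..u, g z))) (Set.Ici u₀) := by
    have h1 : ContinuousOn (fun u : ℝ => u ^ (p - 1)) (Set.Ici u₀) :=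
      continuousOn_id.rpow_const fun u hu =>
        Or.inl (ne_of_gt (lt_of_lt_of_le hu₀0 hu))
    have h2 : Continuous fun u : ℝ => Real.exp (-(G u - G (u ^ ε))) := by
      apply Real.continuous_exp.comp
      apply Continuous.neg
      exact hGcont.sub (hGcont.comp (continuous_id.rpow_const fun u => Or.inr hε0.le))
    have heq : Set.EqOn
        (fun u : ℝ => u ^ (p - 1) * Real.exp (-(∫ z in u ^ ε..u, g z)))
        (fun u : ℝ => u ^ (p - 1) * Real.exp (-(G u - G (u ^ ε)))) (Set.Ici u₀) := by
      intro u hu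
      simp only [hI u hu]
    exact (h1.mul h2.continuousOn).congr heq
  apply Integrable.mono' hint (hfcont.aestronglyMeasurable measurableSet_Ici)
  exact (ae_restrict_iff' measurableSet_Ici).mpr (Filter.Eventually.of_forall hbound)
end

section
/- Let a > 0, σ > 0, δ̄ > 0, b ∈ ℝ, α ∈ (1,2) and ε ∈ (0,1). Define R(z) = (σ²/2)z² + (δ̄^α/α)z^α + b·z for z > 0 and g(u) = 1 + 2δ̄^α/(α σ² u^{ε(2−α)}) for u > 0. Then there exists u₁ ≥ 1 such that for all u ≥ u₁ and all z ∈ [u^{ε}, u]: R(z) > 0, z·g(u) + 2b/σ² > 0, and (a·z)/R(z) ≥ (2a/σ²)/(z·g(u) + 2b/σ²); consequently ∫_{u^{ε}}^{u} (a·z)/R(z) dz ≥ (2a/(σ² g(u))) · ln( (u·g(u) + 2b/σ²)/(u^{ε}·g(u) + 2b/σ²) ). -/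
open MeasureTheory Real

lemma stmt9_expand (a σ δ b α z P G : ℝ) (hσ : σ ≠ 0) (hα : α ≠ 0) (hP : P ≠ 0)
    (hGdef : G = 1 + 2 * δ ^ α / (α * σ ^ 2 * P)) :
    a * z * (z * G + 2 * b / σ ^ 2) -
        2 * a / σ ^ 2 * (σ ^ 2 / 2 * z ^ 2 + δ ^ α / α * z ^ α + b * z) =
      2 * a * δ ^ α / (α * σ ^ 2 * P) * (z ^ 2 - z ^ α * P) := by
  rw [hGdef]; field_simp; ring

/-- With `R(z) = (σ²/2)z² + (δ̄^α/α)z^α + bz` and `g(u) = 1 + 2δ̄^α/(ασ²u^(ε(2-α)))`,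
there is `u₁ ≥ 1` such that for all `u ≥ u₁` and all `z ∈ [u^ε, u]`: `R(z) > 0`,
`z g(u) + 2b/σ² > 0`, `a z / R(z) ≥ (2a/σ²)/(z g(u) + 2b/σ²)`, and consequently
`∫_{u^ε}^u a z / R(z) dz ≥ (2a/(σ² g(u))) ln((u g(u) + 2b/σ²)/(u^ε g(u) + 2b/σ²))`. -/
theorem stmt9 (a σ δ b α ε : ℝ) (ha : 0 < a) (hσ : 0 < σ) (hδ : 0 < δ)
    (hα1 : 1 < α) (hα2 : α < 2) (hε1 : 0 < ε) (hε2 : ε < 1) :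
    ∃ u₁ : ℝ, 1 ≤ u₁ ∧ ∀ u : ℝ, u₁ ≤ u →
      (∀ z ∈ Set.Icc (u ^ ε) u,
        0 < σ ^ 2 / 2 * z ^ 2 + δ ^ α / α * z ^ α + b * z ∧
        0 < z * (1 + 2 * δ ^ α / (α * σ ^ 2 * u ^ (ε * (2 - α)))) + 2 * b / σ ^ 2 ∧
        (2 * a / σ ^ 2) /
            (z * (1 + 2 * δ ^ α / (α * σ ^ 2 * u ^ (ε * (2 - α)))) + 2 * b / σ ^ 2) ≤
          a * z / (σ ^ 2 / 2 * z ^ 2 + δ ^ α / α * z ^ α + b * z)) ∧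
      (2 * a / (σ ^ 2 * (1 + 2 * δ ^ α / (α * σ ^ 2 * u ^ (ε * (2 - α)))))) *
          Real.log
            ((u * (1 + 2 * δ ^ α / (α * σ ^ 2 * u ^ (ε * (2 - α)))) + 2 * b / σ ^ 2) /
              (u ^ ε * (1 + 2 * δ ^ α / (α * σ ^ 2 * u ^ (ε * (2 - α)))) + 2 * b / σ ^ 2)) ≤
        ∫ z in u ^ ε..u, a * z / (σ ^ 2 / 2 * z ^ 2 + δ ^ α / α * z ^ α + b * z) := by
  have hσ2 : (0:ℝ) < σ ^ 2 := by positivity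
  have hα0 : (0:ℝ) < α := by linarith
  set K : ℝ := 1 + 2 * |b| / σ ^ 2 with hKdef
  have hK1 : (1:ℝ) ≤ K := by
    rw [hKdef]
    have : 0 ≤ 2 * |b| / σ ^ 2 := by positivity
    linarith
  have hKpos : 0 < K := lt_of_lt_of_le one_pos hK1
  refine ⟨K ^ (1/ε), Real.one_le_rpow hK1 (by positivity), ?_⟩
  intro u hu
  clear_value K
  have hu1 : (1:ℝ) ≤ u := le_trans (Real.one_le_rpow hK1 (by positivity)) hu
  have hupos : (0:ℝ) < u := lt_of_lt_of_le one_pos hu1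
  have hKuε : K ≤ u ^ ε := by
    calc K = (K ^ (1/ε)) ^ ε := by
            rw [← Real.rpow_mul hKpos.le, one_div, inv_mul_cancel₀ hε1.ne', Real.rpow_one]
      _ ≤ u ^ ε := Real.rpow_le_rpow (by positivity) hu hε1.le
  have huεu : u ^ ε ≤ u := by
    calc u ^ ε ≤ u ^ (1:ℝ) := Real.rpow_le_rpow_of_exponent_le hu1 hε2.le
      _ = u := Real.rpow_one u
  set G : ℝ := 1 + 2 * δ ^ α / (α * σ ^ 2 * u ^ (ε * (2 - α))) with hGdef
  have hPpos : 0 < u ^ (ε * (2 - α)) := Real.rpow_pos_of_pos hupos _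
  have hG1 : (1:ℝ) ≤ G := by
    rw [hGdef]
    have : 0 ≤ 2 * δ ^ α / (α * σ ^ 2 * u ^ (ε * (2 - α))) := by positivity
    linarith
  have hGpos : 0 < G := lt_of_lt_of_le one_pos hG1
  clear_value G
  -- pointwise facts
  have key : ∀ z ∈ Set.Icc (u ^ ε) u,
      0 < σ ^ 2 / 2 * z ^ 2 + δ ^ α / α * z ^ α + b * z ∧
      0 < z * G + 2 * b / σ ^ 2 ∧
      (2 * a / σ ^ 2) / (z * G + 2 * b / σ ^ 2) ≤
        a * z / (σ ^ 2 / 2 * z ^ 2 + δ ^ α / α * z ^ α + b * z) := by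
    intro z hz
    obtain ⟨hz1, hz2⟩ := hz
    have hKz : 1 + 2 * |b| / σ ^ 2 ≤ z := by
      have := le_trans hKuε hz1; rwa [hKdef] at this
    have hz0 : (0:ℝ) < z := by nlinarith [abs_nonneg b, div_nonneg (abs_nonneg b) hσ2.le]
    have habs1 : -|b| ≤ b := neg_abs_le b
    have habs2 : b ≤ |b| := le_abs_self b
    have hRpos : 0 < σ ^ 2 / 2 * z ^ 2 + δ ^ α / α * z ^ α + b * z := by
      have h1 : 0 < δ ^ α / α * z ^ α := by positivity
      have e : σ ^ 2 / 2 * (1 + 2 * |b| / σ ^ 2) = σ ^ 2 / 2 + |b| := by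
        field_simp
      have h2 : σ ^ 2 / 2 + |b| ≤ σ ^ 2 / 2 * z := by
        rw [← e]; exact mul_le_mul_of_nonneg_left hKz (by positivity)
      have h5 : 0 < σ ^ 2 / 2 * z + b := by linarith
      nlinarith [mul_pos hz0 h5]
    have hBpos : 0 < z * G + 2 * b / σ ^ 2 := by
      have h2 : z * 1 ≤ z * G := mul_le_mul_of_nonneg_left hG1 hz0.le
      rw [mul_one] at h2
      have h3 : 0 < 1 + 2 * |b| / σ ^ 2 + 2 * b / σ ^ 2 := by
        have h4 : 0 ≤ (|b| + b) / σ ^ 2 := div_nonneg (by linarith) hσ2.le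
        have e : 1 + 2 * |b| / σ ^ 2 + 2 * b / σ ^ 2 = 1 + 2 * ((|b| + b) / σ ^ 2) := by ring
        rw [e]; linarith
      linarith
    refine ⟨hRpos, hBpos, ?_⟩
    have hkey : z ^ α * u ^ (ε * (2 - α)) ≤ z ^ 2 := by
      have h1 : u ^ (ε * (2 - α)) ≤ z ^ ((2:ℝ) - α) := by
        calc u ^ (ε * (2 - α)) = (u ^ ε) ^ ((2:ℝ) - α) := by
              rw [← Real.rpow_mul hupos.le]
          _ ≤ z ^ ((2:ℝ) - α) := Real.rpow_le_rpow (by positivity) hz1 (by linarith)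
      calc z ^ α * u ^ (ε * (2 - α)) ≤ z ^ α * z ^ ((2:ℝ) - α) := by
            exact mul_le_mul_of_nonneg_left h1 (by positivity)
        _ = z ^ (2:ℝ) := by rw [← Real.rpow_add hz0]; ring_nf
        _ = z ^ 2 := by rw [← Real.rpow_natCast z 2]; norm_num
    rw [div_le_div_iff₀ hBpos hRpos]
    have hδα : (0:ℝ) < δ ^ α := by positivity
    have hzα : (0:ℝ) < z ^ α := by positivity
    have expand := stmt9_expand a σ δ b α z (u ^ (ε * (2 - α))) G hσ.ne' hα0.ne' hPpos.ne' hGdef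
    have hprod : (0:ℝ) ≤ 2 * a * δ ^ α / (α * σ ^ 2 * u ^ (ε * (2 - α))) * (z ^ 2 - z ^ α * u ^ (ε * (2 - α))) :=
      mul_nonneg (by positivity) (by linarith)
    linarith
  refine ⟨key, ?_⟩
  have huε0 : 0 < u ^ ε := Real.rpow_pos_of_pos hupos ε
  -- integrability of the lower function
  have hcont_low : ContinuousOn (fun z => 2 * a / σ ^ 2 / (z * G + 2 * b / σ ^ 2))
      (Set.Icc (u ^ ε) u) := by
    refine continuousOn_const.div ?_ (fun z hz => ((key z hz).2.1).ne')
    exact (continuousOn_id.mul continuousOn_const).add continuousOn_const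
  have int_low : IntervalIntegrable (fun z => 2 * a / σ ^ 2 / (z * G + 2 * b / σ ^ 2))
      volume (u ^ ε) u := hcont_low.intervalIntegrable_of_Icc huεu
  -- integrability of the upper function
  have hcont_hi : ContinuousOn
      (fun z => a * z / (σ ^ 2 / 2 * z ^ 2 + δ ^ α / α * z ^ α + b * z))
      (Set.Icc (u ^ ε) u) := by
    refine ContinuousOn.div (continuousOn_const.mul continuousOn_id) ?_
      (fun z hz => ((key z hz).1).ne')
    refine ContinuousOn.add (ContinuousOn.add ?_ ?_) (continuousOn_const.mul continuousOn_id)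
    · exact (continuous_const.mul (continuous_pow 2)).continuousOn
    · refine continuousOn_const.mul (fun z hz => ?_)
      have hz0 : (0:ℝ) < z := lt_of_lt_of_le huε0 hz.1
      exact (Real.continuousAt_rpow_const z α (Or.inl hz0.ne')).continuousWithinAt
  have int_hi : IntervalIntegrable
      (fun z => a * z / (σ ^ 2 / 2 * z ^ 2 + δ ^ α / α * z ^ α + b * z))
      volume (u ^ ε) u := hcont_hi.intervalIntegrable_of_Icc huεu
  -- FTC for the lower function
  have hderiv : ∀ z ∈ Set.uIcc (u ^ ε) u,
      HasDerivAt (fun z => 2 * a / σ ^ 2 / G * Real.log (z * G + 2 * b / σ ^ 2))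
        (2 * a / σ ^ 2 / (z * G + 2 * b / σ ^ 2)) z := by
    intro z hz
    rw [Set.uIcc_of_le huεu] at hz
    have hB := (key z hz).2.1
    have h1 : HasDerivAt (fun z : ℝ => z * G + 2 * b / σ ^ 2) G z := by
      simpa using ((hasDerivAt_id z).mul_const G).add_const (2 * b / σ ^ 2)
    have h2 := (h1.log hB.ne').const_mul (2 * a / σ ^ 2 / G)
    refine h2.congr_deriv ?_
    rw [div_mul_div_comm, mul_comm (2 * a / σ ^ 2) G,
      mul_div_mul_left _ _ hGpos.ne']
  have hint_eq : ∫ z in u ^ ε..u, 2 * a / σ ^ 2 / (z * G + 2 * b / σ ^ 2)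
      = 2 * a / σ ^ 2 / G * Real.log (u * G + 2 * b / σ ^ 2)
        - 2 * a / σ ^ 2 / G * Real.log (u ^ ε * G + 2 * b / σ ^ 2) :=
    intervalIntegral.integral_eq_sub_of_hasDerivAt hderiv int_low
  have hBu : 0 < u * G + 2 * b / σ ^ 2 := (key u ⟨huεu, le_refl u⟩).2.1
  have hBuε : 0 < u ^ ε * G + 2 * b / σ ^ 2 := (key (u ^ ε) ⟨le_refl _, huεu⟩).2.1
  have hlog : Real.log ((u * G + 2 * b / σ ^ 2) / (u ^ ε * G + 2 * b / σ ^ 2))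
      = Real.log (u * G + 2 * b / σ ^ 2) - Real.log (u ^ ε * G + 2 * b / σ ^ 2) :=
    Real.log_div hBu.ne' hBuε.ne'
  have hcoef : 2 * a / (σ ^ 2 * G) = 2 * a / σ ^ 2 / G := by
    rw [div_div]
  calc 2 * a / (σ ^ 2 * G) *
        Real.log ((u * G + 2 * b / σ ^ 2) / (u ^ ε * G + 2 * b / σ ^ 2))
      = ∫ z in u ^ ε..u, 2 * a / σ ^ 2 / (z * G + 2 * b / σ ^ 2) := by
        rw [hint_eq, hlog, hcoef]; ring
    _ ≤ ∫ z in u ^ ε..u, a * z / (σ ^ 2 / 2 * z ^ 2 + δ ^ α / α * z ^ α + b * z) :=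
        intervalIntegral.integral_mono_on huεu int_low int_hi
          (fun z hz => (key z hz).2.2)
end

section
/- Let 1 < a̲ ≤ ā < 2. There exists a constant C > 0 (depending only on a̲ and ā) such that for all x, y > 0: sup_{α ∈ [a̲, ā]} | y^{1 − α/2}·ln√y − x^{1 − α/2}·ln√x | ≤ C · |y − x| · (1 + 1/x). -/
open Real

lemma aux_hasDeriv (c : ℝ) {t : ℝ} (ht : 0 < t) :
    HasDerivAt (fun s : ℝ => s ^ c * Real.log s / 2)
      (t ^ (c - 1) * (c * Real.log t + 1) / 2) t := by
  have h1 : HasDerivAt (fun s : ℝ => s ^ c) (c * t ^ (c - 1)) t :=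
    Real.hasDerivAt_rpow_const (Or.inl ht.ne')
  have h2 : HasDerivAt Real.log t⁻¹ t := Real.hasDerivAt_log ht.ne'
  have h := (h1.mul h2).div_const 2
  refine h.congr_deriv ?_
  rw [Real.rpow_sub_one ht.ne']
  field_simp

lemma aux_deriv_bound (c : ℝ) (hc0 : 0 < c) (hc1 : c ≤ 1/2) {t : ℝ} (ht : 0 < t) :
    |t ^ (c - 1) * (c * Real.log t + 1) / 2| ≤ 1 + 1 / t := by
  have htc : (0:ℝ) < t ^ (c-1) := Real.rpow_pos_of_pos ht _
  rcases le_or_gt t 1 with h | h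
  · have hlog : c * |Real.log t * t ^ c| ≤ 1 := by
      have := Real.abs_log_mul_self_rpow_lt t c ht h hc0
      calc c * |Real.log t * t ^ c| ≤ c * (1/c) := by
            exact mul_le_mul_of_nonneg_left this.le hc0.le
        _ = 1 := by field_simp
    have htc1 : t ^ c ≤ 1 := Real.rpow_le_one ht.le h hc0.le
    have key : |t ^ (c - 1) * (c * Real.log t + 1)| ≤ 2 / t := by
      rw [Real.rpow_sub_one ht.ne', div_eq_mul_inv, abs_mul, abs_mul]
      rw [abs_of_pos (Real.rpow_pos_of_pos ht c), abs_of_pos (inv_pos.mpr ht)]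
      have h2 : |c * Real.log t + 1| ≤ c * |Real.log t| + 1 := by
        calc |c * Real.log t + 1| ≤ |c * Real.log t| + 1 := by
              simpa using abs_add_le (c * Real.log t) 1
          _ = c * |Real.log t| + 1 := by rw [abs_mul, abs_of_pos hc0]
      calc t ^ c * t⁻¹ * |c * Real.log t + 1| ≤ t ^ c * t⁻¹ * (c * |Real.log t| + 1) := by
            apply mul_le_mul_of_nonneg_left h2
            positivity
        _ = (c * (|Real.log t| * t ^ c) + t ^ c) * t⁻¹ := by ring
        _ ≤ (1 + 1) * t⁻¹ := by
            apply mul_le_mul_of_nonneg_right _ (by positivity)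
            have h3 : c * (|Real.log t| * t ^ c) ≤ 1 := by
              rwa [abs_mul, abs_of_pos (Real.rpow_pos_of_pos ht c)] at hlog
            linarith
        _ = 2 / t := by rw [div_eq_mul_inv]; norm_num
    calc |t ^ (c - 1) * (c * Real.log t + 1) / 2| = |t ^ (c - 1) * (c * Real.log t + 1)| / 2 := by
          rw [abs_div]; norm_num
      _ ≤ (2 / t) / 2 := by linarith
      _ = 1 / t := by ring
      _ ≤ 1 + 1 / t := by linarith
  · have hlt : 0 ≤ Real.log t := Real.log_nonneg h.le
    have hle : Real.log t ≤ 2 * t ^ ((1:ℝ)/2) := by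
      have := Real.log_le_rpow_div (x := t) (ε := 1/2) ht.le (by norm_num)
      linarith [this]
    have h1 : t ^ (c - 1) ≤ 1 :=
      Real.rpow_le_one_of_one_le_of_nonpos h.le (by linarith)
    have h2 : t ^ (c - 1) * (c * Real.log t) ≤ 1 := by
      calc t ^ (c - 1) * (c * Real.log t) ≤ t ^ (c - 1) * (c * (2 * t ^ ((1:ℝ)/2))) := by
            apply mul_le_mul_of_nonneg_left _ htc.le
            exact mul_le_mul_of_nonneg_left hle hc0.le
        _ = 2 * c * (t ^ (c - 1) * t ^ ((1:ℝ)/2)) := by ring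
        _ = 2 * c * t ^ (c - 1 + 1/2) := by rw [← Real.rpow_add ht]
        _ ≤ 2 * c * 1 := by
            apply mul_le_mul_of_nonneg_left _ (by linarith)
            exact Real.rpow_le_one_of_one_le_of_nonpos h.le (by linarith)
        _ ≤ 1 := by linarith
    have hnn : 0 ≤ t ^ (c - 1) * (c * Real.log t + 1) := by positivity
    rw [abs_of_nonneg (by positivity)]
    have : t ^ (c - 1) * (c * Real.log t + 1) ≤ 2 := by nlinarith
    have h1t : 0 < 1 / t := by positivity
    linarith

lemma aux_val_bound (c : ℝ) (hc0 : 0 < c) (hc1 : c ≤ 1/2) {t : ℝ} (ht : 0 < t) :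
    |t ^ c * Real.log t / 2| ≤ 1 / (2 * c) + t := by
  rcases le_or_gt t 1 with h | h
  · have := (Real.abs_log_mul_self_rpow_lt t c ht h hc0).le
    rw [abs_div, abs_mul]
    rw [abs_mul, mul_comm |Real.log t|] at this
    calc |t ^ c| * |Real.log t| / |2| ≤ (1/c) / 2 := by
          rw [abs_two]; linarith
      _ = 1 / (2 * c) := by ring
      _ ≤ 1 / (2 * c) + t := by linarith
  · have hlt : 0 ≤ Real.log t := Real.log_nonneg h.le
    have hle : Real.log t ≤ 2 * t ^ ((1:ℝ)/2) := by
      have := Real.log_le_rpow_div (x := t) (ε := 1/2) ht.le (by norm_num)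
      linarith
    have htc : 0 < t ^ c := Real.rpow_pos_of_pos ht c
    rw [abs_of_nonneg (by positivity)]
    have : t ^ c * Real.log t ≤ 2 * t := by
      calc t ^ c * Real.log t ≤ t ^ c * (2 * t ^ ((1:ℝ)/2)) :=
            mul_le_mul_of_nonneg_left hle htc.le
        _ = 2 * (t ^ c * t ^ ((1:ℝ)/2)) := by ring
        _ = 2 * t ^ (c + 1/2) := by rw [← Real.rpow_add ht]
        _ ≤ 2 * t ^ (1:ℝ) := by
            apply mul_le_mul_of_nonneg_left _ (by norm_num)
            exact Real.rpow_le_rpow_of_exponent_le h.le (by linarith)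
        _ = 2 * t := by rw [Real.rpow_one]
    have hc' : 0 < 1 / (2 * c) := by positivity
    linarith

/-- For `1 < a̲ ≤ ā < 2` there is `C > 0` such that for all `x, y > 0` and all
`α ∈ [a̲, ā]`, `|y^(1-α/2) ln √y - x^(1-α/2) ln √x| ≤ C |y - x| (1 + 1/x)`. -/
theorem stmt13 (al au : ℝ) (h1 : 1 < al) (h2 : al ≤ au) (h3 : au < 2) :
    ∃ C : ℝ, 0 < C ∧
      ∀ x y : ℝ, 0 < x → 0 < y → ∀ α ∈ Set.Icc al au,
        |y ^ (1 - α / 2) * Real.log (Real.sqrt y) - x ^ (1 - α / 2) * Real.log (Real.sqrt x)|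
          ≤ C * |y - x| * (1 + 1 / x) := by
  set b : ℝ := 1 - au / 2 with hb
  have hb0 : 0 < b := by rw [hb]; linarith
  refine ⟨2 / b + 4, by positivity, ?_⟩
  intro x y hx hy α hα
  obtain ⟨hal, hau⟩ := hα
  set c : ℝ := 1 - α / 2 with hc
  have hcb : b ≤ c := by rw [hb, hc]; linarith
  have hc0 : 0 < c := lt_of_lt_of_le hb0 hcb
  have hc1 : c ≤ 1 / 2 := by rw [hc]; linarith
  rw [Real.log_sqrt hy.le, Real.log_sqrt hx.le, ← mul_div_assoc, ← mul_div_assoc]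
  have hCge2 : (2:ℝ) ≤ 2 / b + 4 := by
    have : (0:ℝ) < 2 / b := by positivity
    linarith
  rcases le_or_gt (x / 2) y with hxy | hxy
  · -- MVT on Ici (x/2)
    have key : |y ^ c * Real.log y / 2 - x ^ c * Real.log x / 2| ≤ (1 + 2 / x) * |y - x| := by
      have hmvt := Convex.norm_image_sub_le_of_norm_hasDerivWithin_le
        (f := fun s : ℝ => s ^ c * Real.log s / 2)
        (f' := fun s : ℝ => s ^ (c - 1) * (c * Real.log s + 1) / 2)
        (s := Set.Ici (x / 2)) (C := 1 + 2 / x) (x := x) (y := y)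
        (fun t hts => (aux_hasDeriv c (lt_of_lt_of_le (by positivity) hts)).hasDerivWithinAt)
        (fun t hts => ?_) (convex_Ici _) (by simp; linarith) hxy
      · simpa [Real.norm_eq_abs] using hmvt
      · have ht : 0 < t := lt_of_lt_of_le (by positivity) hts
        have hb1 : |t ^ (c - 1) * (c * Real.log t + 1) / 2| ≤ 1 + 1 / t :=
          aux_deriv_bound c hc0 hc1 ht
        have : 1 / t ≤ 2 / x := by
          rw [div_le_div_iff₀ ht hx]
          have : x / 2 ≤ t := hts
          linarith
        simp only [Real.norm_eq_abs]
        linarith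
    have h1x : (0:ℝ) < 1 / x := by positivity
    calc |y ^ c * Real.log y / 2 - x ^ c * Real.log x / 2| ≤ (1 + 2 / x) * |y - x| := key
      _ ≤ (2 / b + 4) * |y - x| * (1 + 1 / x) := by
          have habs : 0 ≤ |y - x| := abs_nonneg _
          have : (1 + 2 / x) ≤ (2 / b + 4) * (1 + 1 / x) := by
            have h2b : 0 ≤ 2 / b := by positivity
            have e1 : 2 / x = 2 * (1 / x) := by ring
            nlinarith [mul_nonneg h2b h1x.le]
          nlinarith
  · -- far case : |y - x| ≥ x/2
    have hyx : |y - x| = x - y := by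
      rw [abs_of_neg (by linarith : y - x < 0)]; ring
    have hvy := aux_val_bound c hc0 hc1 hy
    have hvx := aux_val_bound c hc0 hc1 hx
    have hcb' : 1 / (2 * c) ≤ 1 / (2 * b) := by
      apply one_div_le_one_div_of_le (by positivity)
      linarith
    have htri : |y ^ c * Real.log y / 2 - x ^ c * Real.log x / 2|
        ≤ |y ^ c * Real.log y / 2| + |x ^ c * Real.log x / 2| := abs_sub _ _
    have hxinv : x * (1 / x) = 1 := by field_simp
    have h1x : (0:ℝ) < 1 / x := by positivity
    have h1b : (0:ℝ) < 1 / b := by positivity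
    have hcb2 : 1 / (2 * b) = (1 / b) / 2 := by rw [div_div, mul_comm]
    rw [hyx]
    have hfar : x / 2 ≤ x - y := by linarith
    -- RHS ≥ (2/b+4) * (x/2) * (1 + 1/x) = (1/b+2)*(x+1)
    have hrhs : (1 / b + 2) * (x + 1) ≤ (2 / b + 4) * (x - y) * (1 + 1 / x) := by
      have e1 : (2 / b + 4) * (x / 2) * (1 + 1 / x) = (1 / b + 2) * (x + x * (1/x)) := by
        ring
      have e2 : (2 / b + 4) * (x / 2) * (1 + 1 / x) ≤ (2 / b + 4) * (x - y) * (1 + 1 / x) := by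
        apply mul_le_mul_of_nonneg_right _ (by positivity)
        apply mul_le_mul_of_nonneg_left hfar (by positivity)
      rw [hxinv] at e1
      linarith
    calc |y ^ c * Real.log y / 2 - x ^ c * Real.log x / 2|
        ≤ (1 / (2 * c) + y) + (1 / (2 * c) + x) := by linarith
      _ ≤ 1 / b + x + y := by
          have : 2 * (1 / (2 * c)) ≤ 1 / b := by
            rw [hcb2] at hcb'; linarith
          linarith
      _ ≤ (1 / b + 2) * (x + 1) := by nlinarith
      _ ≤ (2 / b + 4) * (x - y) * (1 + 1 / x) := hrhs
end
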